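/- Let n ∈ ℝ with n ≠ 0 and n not an even natural number, μ ∈ ℝ, and let γ be a simple closed C² unit-speed curve in ℝ² bounding a region Ω, with signed curvature κ(s) = z(s)ⁿ + μ (where z is the second coordinate and z > 0 on γ and Ω if n < 0 or n ∉ ℤ). Then ∫_Ω n·z^{n-1} dA = 0, and since the integrand has constant sign (z^{n-1} > 0 on Ω when n-1 is not odd, i.e., n not even), no such curve exists. -/

import Mathlib

open Set Function intervalIntegral

private lemma aux_integral_pos {G : ℝ → ℝ} {a b s₀ : ℝ}
    (hG : Continuous G) (hnn : ∀ s ∈ Set.Icc a b, 0 ≤ G s)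
    (hs₀ : s₀ ∈ Set.Ioo a b) (hpos : 0 < G s₀) :
    0 < ∫ s in a..b, G s := by
  have hU : IsOpen (G ⁻¹' Set.Ioi 0 ∩ Set.Ioo a b) :=
    (isOpen_Ioi.preimage hG).inter isOpen_Ioo
  have hs₀U : s₀ ∈ G ⁻¹' Set.Ioi 0 ∩ Set.Ioo a b := ⟨hpos, hs₀⟩
  obtain ⟨ε, hε, hball⟩ := Metric.isOpen_iff.1 hU s₀ hs₀U
  have hsub : Set.Ioo (s₀ - ε) (s₀ + ε) ⊆ G ⁻¹' Set.Ioi 0 ∩ Set.Ioo a b := by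
    rw [← Real.ball_eq_Ioo]; exact hball
  set u := s₀ - ε / 2
  set v := s₀ + ε / 2
  have huv : u < v := by simp only [u, v]; linarith
  have humem : u ∈ Set.Ioo a b := (hsub (by constructor <;> (simp only [u]; linarith))).2
  have hvmem : v ∈ Set.Ioo a b := (hsub (by constructor <;> (simp only [v]; linarith))).2
  have hmid : 0 < ∫ s in u..v, G s := by
    apply intervalIntegral_pos_of_pos_on (hG.intervalIntegrable u v) _ huv
    intro x hx
    exact (hsub ⟨by simp only [u] at hx; linarith [hx.1], by simp only [v] at hx; linarith [hx.2]⟩).1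
  have h1 : 0 ≤ ∫ s in a..u, G s := by
    apply intervalIntegral.integral_nonneg humem.1.le
    exact fun x hx => hnn x ⟨hx.1, le_trans hx.2 humem.2.le⟩
  have h2 : 0 ≤ ∫ s in v..b, G s := by
    apply intervalIntegral.integral_nonneg hvmem.2.le
    exact fun x hx => hnn x ⟨le_trans hvmem.1.le hx.1, hx.2⟩
  have e1 : (∫ s in a..u, G s) + ∫ s in u..v, G s = ∫ s in a..v, G s :=
    intervalIntegral.integral_add_adjacent_intervals (hG.intervalIntegrable _ _)
      (hG.intervalIntegrable _ _)
  have e2 : (∫ s in a..v, G s) + ∫ s in v..b, G s = ∫ s in a..b, G s :=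
    intervalIntegral.integral_add_adjacent_intervals (hG.intervalIntegrable _ _)
      (hG.intervalIntegrable _ _)
  linarith


set_option maxHeartbeats 1000000 in
private lemma no_closed_aux
    (L : ℝ) (hL : 0 < L) (f f₁ : ℝ → ℝ)
    (y z y' z' y'' z'' : ℝ → ℝ)
    (hy : ∀ s, HasDerivAt y (y' s) s) (hz : ∀ s, HasDerivAt z (z' s) s)
    (hy' : ∀ s, HasDerivAt y' (y'' s) s) (hz' : ∀ s, HasDerivAt z' (z'' s) s)
    (hy''c : Continuous y'') (hz''c : Continuous z'')
    (hunit : ∀ s, y' s ^ 2 + z' s ^ 2 = 1)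
    (hclosed : ∀ s, y (s + L) = y s ∧ z (s + L) = z s)
    (hsimple : Set.InjOn (fun s => (y s, z s)) (Set.Ico 0 L))
    (hκ : ∀ s, y' s * z'' s - z' s * y'' s = f (z s))
    (hfd : ∀ a ∈ Set.range z, HasDerivAt f (f₁ a) a)
    (hf₁c : Continuous fun s => f₁ (z s))
    (hsign : (∀ s, 0 ≤ f₁ (z s)) ∨ (∀ s, f₁ (z s) ≤ 0))
    (hne : ∀ s, z s ≠ 0 → f₁ (z s) ≠ 0) : False := by
  -- continuity of basic functions
  have hyc : Continuous y := continuous_iff_continuousAt.2 fun s => (hy s).continuousAt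
  have hzc : Continuous z := continuous_iff_continuousAt.2 fun s => (hz s).continuousAt
  have hy'c : Continuous y' := continuous_iff_continuousAt.2 fun s => (hy' s).continuousAt
  have hz'c : Continuous z' := continuous_iff_continuousAt.2 fun s => (hz' s).continuousAt
  -- orthogonality and the structural ODE
  have ortho : ∀ s, y' s * y'' s + z' s * z'' s = 0 := by
    intro s
    have h1 : HasDerivAt (fun s => y' s ^ 2 + z' s ^ 2)
        (2 * y' s ^ 1 * y'' s + 2 * z' s ^ 1 * z'' s) s := ((hy' s).pow 2).add ((hz' s).pow 2)
    have h2 : (fun s => y' s ^ 2 + z' s ^ 2) = fun _ => (1 : ℝ) := funext hunit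
    rw [h2] at h1
    have h3 := h1.unique (hasDerivAt_const s (1 : ℝ))
    nlinarith [h3]
  have hz2 : ∀ s, z'' s = f (z s) * y' s := by
    intro s
    linear_combination (y' s) * hκ s + (z' s) * ortho s - (z'' s) * hunit s
  have hy2 : ∀ s, y'' s = -f (z s) * z' s := by
    intro s
    linear_combination (-(z' s)) * hκ s + (y' s) * ortho s - (y'' s) * hunit s
  have habs1 : ∀ s, |y' s| ≤ 1 := by
    intro s
    rw [abs_le]; constructor <;> nlinarith [hunit s, sq_nonneg (z' s)]
  have habs2 : ∀ s, |z' s| ≤ 1 := by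
    intro s
    rw [abs_le]; constructor <;> nlinarith [hunit s, sq_nonneg (y' s)]
  -- periodicity
  have hyper : Function.Periodic y L := fun s => (hclosed s).1
  have hzper : Function.Periodic z L := fun s => (hclosed s).2
  have hy'per : Function.Periodic y' L := by
    intro s
    have h1 : HasDerivAt (fun t => y (t + L)) (y' (s + L)) s := by
      simpa [Function.comp_def] using (hy (s + L)).comp s ((hasDerivAt_id s).add_const L)
    rw [show (fun t => y (t + L)) = y from funext hyper] at h1
    exact h1.unique (hy s)
  have hz'per : Function.Periodic z' L := by
    intro s
    have h1 : HasDerivAt (fun t => z (t + L)) (z' (s + L)) s := by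
      simpa [Function.comp_def] using (hz (s + L)).comp s ((hasDerivAt_id s).add_const L)
    rw [show (fun t => z (t + L)) = z from funext hzper] at h1
    exact h1.unique (hz s)
  -- representative in [0, L)
  set rep : ℝ → ℝ := fun s => s - (⌊s / L⌋ : ℤ) * L with hrep_def
  have hrep_mem : ∀ s, rep s ∈ Set.Ico 0 L := by
    intro s
    have h1 : (⌊s / L⌋ : ℝ) ≤ s / L := Int.floor_le _
    have h2 : s / L < (⌊s / L⌋ : ℝ) + 1 := Int.lt_floor_add_one _
    have h3 : (⌊s / L⌋ : ℝ) * L ≤ s := by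
      rw [← le_div_iff₀ hL]; exact h1
    have h4 : s < ((⌊s / L⌋ : ℝ) + 1) * L := by
      rw [← div_lt_iff₀ hL]; exact h2
    constructor
    · simp only [hrep_def]; linarith
    · simp only [hrep_def]; nlinarith
  have hrep_eq : ∀ (g : ℝ → ℝ), Function.Periodic g L → ∀ s, g (rep s) = g s := by
    intro g hg s
    exact hg.sub_int_mul_eq ⌊s / L⌋
  -- key injectivity consequence
  have key : ∀ s t : ℝ, y s = y t → z s = z t → ∃ k : ℤ, s - t = k * L := by
    intro s t h1 h2
    have e1 : (fun s => (y s, z s)) (rep s) = (fun s => (y s, z s)) (rep t) := by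
      simp only [Prod.mk.injEq]
      rw [hrep_eq y hyper s, hrep_eq z hzper s, hrep_eq y hyper t, hrep_eq z hzper t]
      exact ⟨h1, h2⟩
    have := hsimple (hrep_mem s) (hrep_mem t) e1
    refine ⟨⌊s / L⌋ - ⌊t / L⌋, ?_⟩
    simp only [hrep_def] at this
    push_cast
    linarith [this]
  -- bound for y
  obtain ⟨B, hB⟩ := (isCompact_Icc (a := (0:ℝ)) (b := L)).exists_bound_of_continuousOn
    hyc.continuousOn
  have hyB : ∀ s, |y s| ≤ B := by
    intro s
    rw [← hrep_eq y hyper s]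
    simpa using hB (rep s) (Set.mem_Icc_of_Ico (hrep_mem s))
  -- max and min of z
  obtain ⟨s₀, hs₀mem, hs₀max⟩ := isCompact_Icc.exists_isMaxOn (Set.nonempty_Icc.2 hL.le)
    hzc.continuousOn
  obtain ⟨smin, hsminmem, hsminmin⟩ := isCompact_Icc.exists_isMinOn (Set.nonempty_Icc.2 hL.le)
    hzc.continuousOn
  set M := z s₀ with hM
  set m := z smin with hm
  have zmax : ∀ s, z s ≤ M := by
    intro s
    rw [← hrep_eq z hzper s]
    exact hs₀max (Set.mem_Icc_of_Ico (hrep_mem s))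
  have zmin : ∀ s, m ≤ z s := by
    intro s
    rw [← hrep_eq z hzper s]
    exact hsminmin (Set.mem_Icc_of_Ico (hrep_mem s))
  -- m < M
  have hmM : m < M := by
    rcases lt_or_ge m M with h | h
    · exact h
    · exfalso
      have hzconst : ∀ s, z s = M := fun s => le_antisymm (zmax s) (le_trans h (zmin s))
      have hz'0 : ∀ s, z' s = 0 := by
        intro s
        have : HasDerivAt z 0 s := by
          rw [show z = fun _ => M from funext hzconst]; exact hasDerivAt_const s M
        exact (hz s).unique this
      have hy'sq : ∀ s, y' s ^ 2 = 1 := by intro s; have := hunit s; rw [hz'0 s] at this; nlinarith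
      have hy'cases : ∀ s, y' s = 1 ∨ y' s = -1 := by
        intro s
        have : (y' s - 1) * (y' s + 1) = 0 := by nlinarith [hy'sq s]
        rcases mul_eq_zero.1 this with h | h
        · left; linarith
        · right; linarith
      have hy'const : ∀ s, y' s = y' 0 := by
        intro s
        by_contra hne'
        have h0 : (0:ℝ) ∈ Set.uIcc (y' 0) (y' s) := by
          rcases hy'cases 0 with h1 | h1 <;> rcases hy'cases s with h2 | h2
          · exact absurd (h2.trans h1.symm) hne'
          · rw [h1, h2, Set.mem_uIcc]; norm_num
          · rw [h1, h2, Set.mem_uIcc]; norm_num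
          · exact absurd (h2.trans h1.symm) hne'
        obtain ⟨t, _, ht⟩ := intermediate_value_uIcc (hy'c.continuousOn (s := Set.uIcc 0 s)) h0
        have := hy'sq t
        rw [ht] at this; norm_num at this
      have hint : y L - y 0 = ∫ t in (0:ℝ)..L, y' t :=
        (intervalIntegral.integral_eq_sub_of_hasDerivAt (fun t _ => hy t)
          (hy'c.intervalIntegrable _ _)).symm
      have hconst : ∫ t in (0:ℝ)..L, y' t = ∫ t in (0:ℝ)..L, y' 0 :=
        intervalIntegral.integral_congr fun t _ => hy'const t
      rw [hconst] at hint
      simp only [intervalIntegral.integral_const, smul_eq_mul, sub_zero] at hint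
      have hyL : y L = y 0 := by have := hyper 0; simpa using this
      rcases hy'cases 0 with h1 | h1 <;> rw [h1] at hint <;> rw [hyL] at hint <;> nlinarith
  -- critical points at max/min
  have crit0 : z' s₀ = 0 := by
    have hmax : IsMaxOn z Set.univ s₀ := fun x _ => zmax x
    exact (hmax.isLocalMax Filter.univ_mem).hasDerivAt_eq_zero (hz s₀)
  have critmin : z' smin = 0 := by
    have hmin : IsMinOn z Set.univ smin := fun x _ => zmin x
    exact (hmin.isLocalMin Filter.univ_mem).hasDerivAt_eq_zero (hz smin)

  -- surjectivity onto [m, M]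
  have hsurj : ∀ a ∈ Set.Icc m M, ∃ s ∈ Set.uIcc smin s₀, z s = a := by
    intro a ha
    have h1 := intermediate_value_uIcc (f := z) (a := smin) (b := s₀) hzc.continuousOn
    have h2 : a ∈ Set.uIcc (z smin) (z s₀) := by
      rw [show Set.uIcc (z smin) (z s₀) = Set.Icc m M from Set.uIcc_of_le hmM.le]
      exact ha
    obtain ⟨s, hs1, hs2⟩ := h1 h2
    exact ⟨s, hs1, hs2⟩
  -- continuity of f ∘ z
  have hfzc : Continuous fun s => f (z s) := by
    have : (fun s => f (z s)) = fun s => y' s * z'' s - z' s * y'' s :=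
      funext fun s => (hκ s).symm
    rw [this]
    exact (hy'c.mul hz''c).sub (hz'c.mul hy''c)
  -- bounds for f and f₁ on [m, M]
  obtain ⟨C₀, hC₀⟩ := (isCompact_uIcc (a := smin) (b := s₀)).exists_bound_of_continuousOn
    hfzc.continuousOn
  obtain ⟨C₁, hC₁⟩ := (isCompact_uIcc (a := smin) (b := s₀)).exists_bound_of_continuousOn
    hf₁c.continuousOn
  set C : ℝ := |C₀| + |C₁| + 1 with hC
  have hCpos : 0 < C := by positivity
  have hfb : ∀ a ∈ Set.Icc m M, |f a| ≤ C := by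
    intro a ha
    obtain ⟨s, hs1, hs2⟩ := hsurj a ha
    rw [← hs2]
    calc |f (z s)| ≤ C₀ := by simpa using hC₀ s hs1
      _ ≤ C := by rw [hC]; have := abs_nonneg C₁; have := le_abs_self C₀; linarith
  have hf₁b : ∀ a ∈ Set.Icc m M, |f₁ a| ≤ C := by
    intro a ha
    obtain ⟨s, hs1, hs2⟩ := hsurj a ha
    rw [← hs2]
    calc |f₁ (z s)| ≤ C₁ := by simpa using hC₁ s hs1
      _ ≤ C := by rw [hC]; have := abs_nonneg C₀; have := le_abs_self C₁; linarith
  -- f is Lipschitz on [m, M]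
  have hlipf : ∀ a ∈ Set.Icc m M, ∀ b ∈ Set.Icc m M, |f a - f b| ≤ C * |a - b| := by
    intro a ha b hb
    have h1 : ∀ x ∈ Set.Icc m M, HasDerivWithinAt f (f₁ x) (Set.Icc m M) x := by
      intro x hx
      obtain ⟨s, _, hs2⟩ := hsurj x hx
      exact (hfd x ⟨s, hs2⟩).hasDerivWithinAt
    have h2 : ∀ x ∈ Set.Icc m M, ‖f₁ x‖ ≤ C := by
      intro x hx; simpa using hf₁b x hx
    have := Convex.norm_image_sub_le_of_norm_hasDerivWithin_le h1 h2 (convex_Icc m M) hb ha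
    simpa using this
  -- the vector field
  set V : ℝ × ℝ × ℝ → ℝ × ℝ × ℝ := fun x => (x.2.2, -f x.1 * x.2.2, f x.1 * x.2.1) with hV
  set S : Set (ℝ × ℝ × ℝ) := {x | x.1 ∈ Set.Icc m M ∧ |x.2.1| ≤ 1 ∧ |x.2.2| ≤ 1} with hS
  have hK0 : (0:ℝ) ≤ 1 + 2 * C := by linarith
  set K : NNReal := Real.toNNReal (1 + 2 * C) with hK
  have hVlip : LipschitzOnWith K V S := by
    rw [lipschitzOnWith_iff_dist_le_mul]
    intro x hx x' hx'
    obtain ⟨hx1, hx2, hx3⟩ := hx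
    obtain ⟨hx1', hx2', hx3'⟩ := hx'
    set D := dist x x' with hD
    have hD0 : 0 ≤ D := dist_nonneg
    have hD1 : |x.1 - x'.1| ≤ D := by
      rw [hD, Prod.dist_eq, ← Real.dist_eq]; exact le_max_left _ _
    have hD2 : |x.2.1 - x'.2.1| ≤ D := by
      rw [hD, Prod.dist_eq]
      refine le_trans ?_ (le_max_right _ _)
      rw [Prod.dist_eq, ← Real.dist_eq]; exact le_max_left _ _
    have hD3 : |x.2.2 - x'.2.2| ≤ D := by
      rw [hD, Prod.dist_eq]
      refine le_trans ?_ (le_max_right _ _)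
      rw [Prod.dist_eq, ← Real.dist_eq]; exact le_max_right _ _
    have hfx : |f x.1 - f x'.1| ≤ C * D :=
      le_trans (hlipf x.1 hx1 x'.1 hx1') (by nlinarith [hD1])
    have hfx' : |f x'.1| ≤ C := hfb x'.1 hx1'
    have hKco : (K : ℝ) = 1 + 2 * C := Real.coe_toNNReal _ hK0
    rw [hKco, Prod.dist_eq, Prod.dist_eq]
    have hc1 : dist (V x).1 (V x').1 ≤ (1 + 2*C) * D := by
      simp only [hV, Real.dist_eq]
      nlinarith [hD3, abs_nonneg (x.2.2 - x'.2.2)]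
    have hc2 : dist (V x).2.1 (V x').2.1 ≤ (1 + 2*C) * D := by
      simp only [hV, Real.dist_eq]
      have e : -f x.1 * x.2.2 - -f x'.1 * x'.2.2
          = -((f x.1 - f x'.1) * x.2.2) - f x'.1 * (x.2.2 - x'.2.2) := by ring
      rw [e]
      calc |(-((f x.1 - f x'.1) * x.2.2)) - f x'.1 * (x.2.2 - x'.2.2)|
          ≤ |(-((f x.1 - f x'.1) * x.2.2))| + |f x'.1 * (x.2.2 - x'.2.2)| := abs_sub _ _
        _ = |f x.1 - f x'.1| * |x.2.2| + |f x'.1| * |x.2.2 - x'.2.2| := by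
            rw [abs_neg, abs_mul, abs_mul]
        _ ≤ C * D * 1 + C * D := by
            have h1 : |f x.1 - f x'.1| * |x.2.2| ≤ C * D * 1 := by
              apply mul_le_mul hfx hx3 (abs_nonneg _) (mul_nonneg hCpos.le hD0)
            have h2 : |f x'.1| * |x.2.2 - x'.2.2| ≤ C * D :=
              mul_le_mul hfx' hD3 (abs_nonneg _) hCpos.le
            linarith
        _ ≤ (1 + 2*C) * D := by nlinarith
    have hc3 : dist (V x).2.2 (V x').2.2 ≤ (1 + 2*C) * D := by
      simp only [hV, Real.dist_eq]
      have e : f x.1 * x.2.1 - f x'.1 * x'.2.1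
          = (f x.1 - f x'.1) * x.2.1 + f x'.1 * (x.2.1 - x'.2.1) := by ring
      rw [e]
      calc |(f x.1 - f x'.1) * x.2.1 + f x'.1 * (x.2.1 - x'.2.1)|
          ≤ |(f x.1 - f x'.1) * x.2.1| + |f x'.1 * (x.2.1 - x'.2.1)| := abs_add_le _ _
        _ = |f x.1 - f x'.1| * |x.2.1| + |f x'.1| * |x.2.1 - x'.2.1| := by
            rw [abs_mul, abs_mul]
        _ ≤ C * D * 1 + C * D := by
            have h1 : |f x.1 - f x'.1| * |x.2.1| ≤ C * D * 1 := by
              apply mul_le_mul hfx hx2 (abs_nonneg _) (mul_nonneg hCpos.le hD0)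
            have h2 : |f x'.1| * |x.2.1 - x'.2.1| ≤ C * D :=
              mul_le_mul hfx' hD2 (abs_nonneg _) hCpos.le
            linarith
        _ ≤ (1 + 2*C) * D := by nlinarith
    exact max_le hc1 (max_le hc2 hc3)
  -- trajectories
  have huS : ∀ t : ℝ, (z t, y' t, z' t) ∈ S := fun t => ⟨⟨zmin t, zmax t⟩, habs1 t, habs2 t⟩
  have hu' : ∀ t, HasDerivAt (fun t => (z t, y' t, z' t)) (V (z t, y' t, z' t)) t := by
    intro t
    have h1 : HasDerivAt (fun t => (z t, y' t, z' t)) (z' t, y'' t, z'' t) t :=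
      (hz t).prodMk ((hy' t).prodMk (hz' t))
    have h2 : V (z t, y' t, z' t) = (z' t, y'' t, z'' t) := by
      simp only [hV]
      rw [hy2 t, hz2 t]
    rw [h2]; exact h1
  have huc : Continuous fun t => (z t, y' t, z' t) := hzc.prodMk (hy'c.prodMk hz'c)
  -- reflection symmetry at critical points
  have hrefl : ∀ σ : ℝ, z' σ = 0 →
      ∀ s, z (2*σ - s) = z s ∧ y' (2*σ - s) = y' s ∧ z' (2*σ - s) = -z' s := by
    intro σ hσ
    have main : ∀ b, σ ≤ b →
        z (2*σ - b) = z b ∧ y' (2*σ - b) = y' b ∧ z' (2*σ - b) = -z' b := by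
      intro b hb
      set g : ℝ → ℝ × ℝ × ℝ := fun t => (z (2*σ - t), y' (2*σ - t), -z' (2*σ - t)) with hg
      have hic : Continuous fun t : ℝ => 2*σ - t := continuous_const.sub continuous_id
      have hgc : Continuous g :=
        ((hzc.comp hic).prodMk ((hy'c.comp hic).prodMk (hz'c.comp hic).neg))
      have hgS : ∀ t : ℝ, g t ∈ S := fun t =>
        ⟨⟨zmin _, zmax _⟩, habs1 _, by rw [abs_neg]; exact habs2 _⟩
      have hg' : ∀ t, HasDerivAt g (V (g t)) t := by
        intro t
        have hi : HasDerivAt (fun t : ℝ => 2*σ - t) (-1) t := by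
          simpa using (hasDerivAt_id' (x := t)).const_sub (2*σ)
        have hz_c : HasDerivAt (fun t => z (2*σ - t)) (z' (2*σ - t) * (-1)) t :=
          HasDerivAt.comp t (hz _) hi
        have hy'_c : HasDerivAt (fun t => y' (2*σ - t)) (y'' (2*σ - t) * (-1)) t :=
          HasDerivAt.comp t (hy' _) hi
        have hz'_c : HasDerivAt (fun t => -z' (2*σ - t)) (-(z'' (2*σ - t) * (-1))) t :=
          (HasDerivAt.comp t (hz' _) hi).neg
        have h1 : HasDerivAt g
            (z' (2*σ - t) * (-1), y'' (2*σ - t) * (-1), -(z'' (2*σ - t) * (-1))) t :=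
          hz_c.prodMk (hy'_c.prodMk hz'_c)
        have h2 : V (g t)
            = (z' (2*σ - t) * (-1), y'' (2*σ - t) * (-1), -(z'' (2*σ - t) * (-1))) := by
          simp only [hg, hV, Prod.mk.injEq]
          refine ⟨by ring, by rw [hy2]; ring, by rw [hz2]; ring⟩
        rw [h2]; exact h1
      have hinit : (fun t => (z t, y' t, z' t)) σ = g σ := by
        simp only [hg]
        rw [show 2*σ - σ = σ by ring, hσ]
        norm_num
      have heq := ODE_solution_unique_of_mem_Icc_right (v := fun _ x => V x)
        (s := fun _ => S) (K := K) (f := fun t => (z t, y' t, z' t)) (g := g)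
        (a := σ) (b := b) (fun _ _ => hVlip)
        huc.continuousOn (fun t _ => (hu' t).hasDerivWithinAt) (fun t _ => huS t)
        hgc.continuousOn (fun t _ => (hg' t).hasDerivWithinAt) (fun t _ => hgS t)
        hinit
      have hb' := heq (Set.right_mem_Icc.2 hb)
      simp only [hg, Prod.mk.injEq] at hb'
      obtain ⟨e1, e2, e3⟩ := hb'
      exact ⟨e1.symm, e2.symm, by linarith [e3]⟩
    intro s
    rcases le_total σ s with hle | hle
    · exact main s hle
    · have h := main (2*σ - s) (by linarith)
      rw [show 2*σ - (2*σ - s) = s by ring] at h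
      exact ⟨h.1.symm, h.2.1.symm, by linarith [h.2.2]⟩
  -- y-reflection
  have hyrefl : ∀ σ : ℝ, z' σ = 0 → ∀ s, y (2*σ - s) + y s = 2 * y σ := by
    intro σ hσ s
    set D : ℝ → ℝ := fun s => y (2*σ - s) + y s with hDdef
    have hD' : ∀ t, HasDerivAt D 0 t := by
      intro t
      have hi : HasDerivAt (fun t : ℝ => 2*σ - t) (-1) t := by
        simpa using (hasDerivAt_id' (x := t)).const_sub (2*σ)
      have h1 : HasDerivAt D (y' (2*σ - t) * (-1) + y' t) t :=
        (HasDerivAt.comp t (hy _) hi).add (hy t)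
      have h2 : y' (2*σ - t) * (-1) + y' t = 0 := by
        rw [(hrefl σ hσ t).2.1]; ring
      rw [h2] at h1; exact h1
    have hconst := is_const_of_deriv_eq_zero (𝕜 := ℝ) (f := D)
      (fun t => (hD' t).differentiableAt) (fun t => (hD' t).deriv) s σ
    have h3 : D σ = 2 * y σ := by
      simp only [hDdef]; rw [show 2*σ - σ = σ by ring]; ring
    rw [← h3]; exact hconst
  -- rigidity of critical points
  have hrig : ∀ σ : ℝ, z' σ = 0 → y σ = y s₀ ∧ ∃ k : ℤ, 2*(σ - s₀) = k * L := by
    intro σ hσ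
    set δ : ℝ := 2*σ - 2*s₀ with hδ
    set a : ℝ := y σ - y s₀ with ha
    have htrz : ∀ s, z (s + δ) = z s := by
      intro s
      have h1 := (hrefl σ hσ (2*s₀ - s)).1
      have h2 := (hrefl s₀ crit0 s).1
      rw [show 2*σ - (2*s₀ - s) = s + δ by rw [hδ]; ring] at h1
      exact h1.trans h2
    have htry : ∀ s, y (s + δ) = y s + 2*a := by
      intro s
      have h1 := hyrefl σ hσ (2*s₀ - s)
      have h2 := hyrefl s₀ crit0 s
      rw [show 2*σ - (2*s₀ - s) = s + δ by rw [hδ]; ring] at h1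
      simp only [ha]; linarith
    have hiter : ∀ k : ℕ, y ((k:ℝ) * δ) = y 0 + (k:ℝ) * (2*a) := by
      intro k
      induction k with
      | zero => simp
      | succ k ih =>
        have h1 := htry ((k:ℝ) * δ)
        push_cast
        rw [show ((k:ℝ)+1) * δ = (k:ℝ)*δ + δ by ring, h1, ih]
        ring
    have ha0 : a = 0 := by
      by_contra hane
      obtain ⟨k, hk⟩ := exists_nat_gt (B / |a|)
      have hk2 : B < (k:ℝ) * |a| := by
        rw [div_lt_iff₀ (abs_pos.2 hane)] at hk; linarith
      have h1 := hiter k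
      have h2 := hyB ((k:ℝ) * δ)
      have h3 := hyB 0
      rw [h1] at h2
      have h5 : |(k:ℝ) * (2*a)| ≤ 2*B := by
        have e : (k:ℝ)*(2*a) = (y 0 + (k:ℝ)*(2*a)) + -(y 0) := by ring
        rw [e]
        refine (abs_add_le _ _).trans ?_
        rw [abs_neg]
        linarith [h2, h3]
      have h6 : |(k:ℝ)*(2*a)| = (k:ℝ)*(2*|a|) := by
        rw [abs_mul, abs_mul, Nat.abs_cast]
        norm_num
      rw [h6] at h5
      nlinarith [hk2, h5]
    refine ⟨by rw [ha] at ha0; linarith, ?_⟩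
    have hy0 : y δ = y 0 := by
      have := htry 0
      rw [ha0] at this
      simpa using this
    have hz0 : z δ = z 0 := by simpa using htrz 0
    obtain ⟨k, hk⟩ := key δ 0 hy0 hz0
    exact ⟨k, by rw [hδ] at *; linarith [hk]⟩
  -- no integer multiple of L strictly between 0 and L
  have noint : ∀ k : ℤ, 0 < (k:ℝ)*L → (k:ℝ)*L < L → False := by
    intro k h1 h2
    have hk0 : (0:ℝ) < (k:ℝ) := by nlinarith
    have hk0' : 0 < k := by exact_mod_cast hk0
    have hk1 : (1:ℝ) ≤ (k:ℝ) := by exact_mod_cast hk0'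
    nlinarith
  -- s₁ := s₀ + L/2 is the min, and no critical points inside (s₀, s₁)
  set s₁ : ℝ := s₀ + L/2 with hs₁def
  have zs₁ : z s₁ = m := by
    obtain ⟨_, k, hk⟩ := hrig smin critmin
    rcases Int.even_or_odd k with ⟨t, ht⟩ | ⟨t, ht⟩
    · exfalso
      have he : smin = s₀ + (t:ℝ) * L := by
        rw [ht] at hk; push_cast at hk; linarith
      have h2 : z smin = z s₀ := by
        rw [he]; exact (hzper.int_mul t) s₀
      rw [← hM, ← hm] at h2
      exact absurd h2 (ne_of_lt hmM)
    · have he : smin = s₁ + (t:ℝ) * L := by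
        rw [ht] at hk; push_cast at hk; rw [hs₁def]; linarith
      have h2 : z smin = z s₁ := by
        rw [he]; exact (hzper.int_mul t) s₁
      rw [← h2, hm]
  have crits₁ : z' s₁ = 0 := by
    have hminon : IsMinOn z Set.univ s₁ := by
      intro x _
      simp only [Set.mem_setOf_eq]
      rw [zs₁]; exact zmin x
    exact (hminon.isLocalMin Filter.univ_mem).hasDerivAt_eq_zero (hz s₁)
  have ys₁ : y s₁ = y s₀ := (hrig s₁ crits₁).1
  have hs01 : s₀ < s₁ := by rw [hs₁def]; linarith
  have hnocrit : ∀ σ ∈ Set.Ioo s₀ s₁, z' σ ≠ 0 := by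
    intro σ hσ h0
    obtain ⟨_, k, hk⟩ := hrig σ h0
    have hσ1 := hσ.1
    have hσ2 := hσ.2
    rw [hs₁def] at hσ2
    exact noint k (by rw [← hk]; linarith) (by rw [← hk]; linarith)
  have hz'neg : ∀ σ ∈ Set.Ioo s₀ s₁, z' σ < 0 := by
    intro σ hσ
    rcases lt_trichotomy (z' σ) 0 with h | h | h
    · exact h
    · exact absurd h (hnocrit σ hσ)
    · exfalso
      have hall : ∀ τ ∈ Set.Ioo s₀ s₁, 0 < z' τ := by
        intro τ hτ
        rcases lt_trichotomy (z' τ) 0 with h2 | h2 | h2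
        · exfalso
          have hsub : Set.uIcc σ τ ⊆ Set.Ioo s₀ s₁ :=
            (Set.ordConnected_Ioo).uIcc_subset hσ hτ
          have h0mem : (0:ℝ) ∈ Set.uIcc (z' σ) (z' τ) := by
            rw [Set.mem_uIcc]; right; exact ⟨h2.le, h.le⟩
          obtain ⟨x, hxmem, hx⟩ := intermediate_value_uIcc hz'c.continuousOn h0mem
          exact hnocrit x (hsub hxmem) hx
        · exact absurd h2 (hnocrit τ hτ)
        · exact h2
      have hmono : StrictMonoOn z (Set.Icc s₀ s₁) := by
        apply strictMonoOn_of_deriv_pos (convex_Icc _ _) hzc.continuousOn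
        intro x hx
        rw [interior_Icc] at hx
        rw [(hz x).deriv]
        exact hall x hx
      have h3 := hmono (Set.left_mem_Icc.2 hs01.le) (Set.right_mem_Icc.2 hs01.le) hs01
      rw [zs₁] at h3
      exact absurd h3 (not_lt.2 hmM.le)
  have hanti : StrictAntiOn z (Set.Icc s₀ s₁) := by
    apply strictAntiOn_of_deriv_neg (convex_Icc _ _) hzc.continuousOn
    intro x hx
    rw [interior_Icc] at hx
    rw [(hz x).deriv]
    exact hz'neg x hx
  -- y ≠ y s₀ in the open arc
  have hyne : ∀ σ ∈ Set.Ioo s₀ s₁, y σ ≠ y s₀ := by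
    intro σ hσ heq
    have h1 : z (2*s₁ - σ) = z σ := (hrefl s₁ crits₁ σ).1
    have h2 : y (2*s₁ - σ) = y σ := by
      have h3 := hyrefl s₁ crits₁ σ
      rw [ys₁] at h3
      linarith [heq]
    obtain ⟨k, hk⟩ := key (2*s₁ - σ) σ h2 h1
    have hσ1 := hσ.1
    have hσ2 := hσ.2
    rw [hs₁def] at hσ2
    refine noint k (by rw [← hk]; rw [hs₁def]; linarith) (by rw [← hk]; rw [hs₁def]; linarith)
  -- constant sign of y - y s₀ on the open arc
  have hmid : s₀ + L/4 ∈ Set.Ioo s₀ s₁ := by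
    rw [hs₁def]; constructor <;> [linarith; linarith]
  have hhs : (∀ σ ∈ Set.Ioo s₀ s₁, y σ < y s₀) ∨ (∀ σ ∈ Set.Ioo s₀ s₁, y s₀ < y σ) := by
    rcases lt_or_gt_of_ne (hyne _ hmid) with h | h
    · left
      intro σ hσ
      rcases lt_trichotomy (y σ) (y s₀) with h2 | h2 | h2
      · exact h2
      · exact absurd h2 (hyne σ hσ)
      · exfalso
        have hsub : Set.uIcc (s₀ + L/4) σ ⊆ Set.Ioo s₀ s₁ :=
          (Set.ordConnected_Ioo).uIcc_subset hmid hσ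
        have h0mem : y s₀ ∈ Set.uIcc (y (s₀ + L/4)) (y σ) := by
          rw [Set.mem_uIcc]; left; exact ⟨h.le, h2.le⟩
        obtain ⟨x, hxmem, hx⟩ := intermediate_value_uIcc hyc.continuousOn h0mem
        exact hyne x (hsub hxmem) hx
    · right
      intro σ hσ
      rcases lt_trichotomy (y s₀) (y σ) with h2 | h2 | h2
      · exact h2
      · exact absurd h2.symm (hyne σ hσ)
      · exfalso
        have hsub : Set.uIcc (s₀ + L/4) σ ⊆ Set.Ioo s₀ s₁ :=
          (Set.ordConnected_Ioo).uIcc_subset hmid hσ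
        have h0mem : y s₀ ∈ Set.uIcc (y (s₀ + L/4)) (y σ) := by
          rw [Set.mem_uIcc]; right; exact ⟨h2.le, h.le⟩
        obtain ⟨x, hxmem, hx⟩ := intermediate_value_uIcc hyc.continuousOn h0mem
        exact hyne x (hsub hxmem) hx
  -- integration by parts identity
  have hcomp : ∀ s : ℝ, HasDerivAt (fun s => f (z s)) (f₁ (z s) * z' s) s := by
    intro s
    exact HasDerivAt.comp s (hfd (z s) ⟨s, rfl⟩) (hz s)
  set h : ℝ → ℝ := fun s => y s - y s₀ with hhdef
  have hhc : Continuous h := hyc.sub continuous_const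
  have hIBP := intervalIntegral.integral_mul_deriv_eq_deriv_mul_of_hasDerivAt
      (a := s₀) (b := s₁) (u := fun s => f (z s)) (v := h)
      (u' := fun s => f₁ (z s) * z' s) (v' := y')
      hfzc.continuousOn hhc.continuousOn
      (fun x _ => hcomp x) (fun x _ => (hy x).sub_const _)
      ((hf₁c.mul hz'c).intervalIntegrable _ _) (hy'c.intervalIntegrable _ _)
  have hhs₁ : h s₁ = 0 := by simp only [hhdef]; rw [ys₁]; ring
  have hhs₀ : h s₀ = 0 := by simp only [hhdef]; ring
  rw [hhs₁, hhs₀, mul_zero, mul_zero] at hIBP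
  have hFTC : ∫ x in s₀..s₁, f (z x) * y' x = 0 := by
    have h1 : ∫ x in s₀..s₁, f (z x) * y' x = ∫ x in s₀..s₁, z'' x :=
      intervalIntegral.integral_congr fun x _ => (hz2 x).symm
    rw [h1, intervalIntegral.integral_eq_sub_of_hasDerivAt (fun t _ => hz' t)
      (hz''c.intervalIntegrable _ _), crits₁, crit0]
    ring
  have hmain : ∫ x in s₀..s₁, f₁ (z x) * z' x * h x = 0 := by
    rw [hFTC] at hIBP
    linarith [hIBP]
  -- find a point where z ≠ 0
  have hq1 : s₀ + L/8 ∈ Set.Ioo s₀ s₁ := by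
    rw [hs₁def]; constructor <;> linarith
  have hq2 : s₀ + 3*L/8 ∈ Set.Ioo s₀ s₁ := by
    rw [hs₁def]; constructor <;> linarith
  obtain ⟨sstar, hsstar, hzstar⟩ : ∃ sstar ∈ Set.Ioo s₀ s₁, z sstar ≠ 0 := by
    by_cases hza : z (s₀ + L/8) = 0
    · refine ⟨s₀ + 3*L/8, hq2, ?_⟩
      have h3 := hanti (Set.mem_Icc_of_Ioo hq1) (Set.mem_Icc_of_Ioo hq2) (by linarith)
      rw [hza] at h3
      exact ne_of_lt h3
    · exact ⟨_, hq1, hza⟩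
  have hIoo_of : ∀ x ∈ Set.Icc s₀ s₁, x = s₀ ∨ x = s₁ ∨ x ∈ Set.Ioo s₀ s₁ := by
    intro x hx
    rcases hx.1.eq_or_lt with h1 | h1
    · exact Or.inl h1.symm
    rcases hx.2.eq_or_lt with h2 | h2
    · exact Or.inr (Or.inl h2)
    · exact Or.inr (Or.inr ⟨h1, h2⟩)
  -- final contradiction, by cases on the signs
  have hGc : Continuous fun x => f₁ (z x) * z' x * h x := (hf₁c.mul hz'c).mul hhc
  have hz'star : z' sstar < 0 := hz'neg sstar hsstar
  have hf₁star : f₁ (z sstar) ≠ 0 := hne sstar hzstar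
  rcases hsign with hpos | hneg <;> rcases hhs with hlt | hgt
  · -- f₁ ≥ 0, h < 0 : integrand ≥ 0
    have h0 : 0 < ∫ x in s₀..s₁, f₁ (z x) * z' x * h x := by
      apply aux_integral_pos hGc _ hsstar
      · have hp : 0 < f₁ (z sstar) := lt_of_le_of_ne (hpos sstar) (Ne.symm hf₁star)
        have hhneg : h sstar < 0 := by
          simp only [hhdef]; have := hlt sstar hsstar; linarith
        nlinarith [mul_pos hp (mul_pos_of_neg_of_neg hz'star hhneg)]
      · intro x hx
        rcases hIoo_of x hx with h1 | h1 | h1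
        · subst h1; simp [hhs₀]
        · subst h1; simp [hhs₁]
        · have hhneg : h x < 0 := by
            simp only [hhdef]; have := hlt x h1; linarith
          nlinarith [mul_nonneg (hpos x) (mul_pos_of_neg_of_neg (hz'neg x h1) hhneg).le]
    linarith [hmain]
  · -- f₁ ≥ 0, h > 0 : integrand ≤ 0
    have h0 : 0 < ∫ x in s₀..s₁, -(f₁ (z x) * z' x * h x) := by
      apply aux_integral_pos hGc.neg _ hsstar
      · have hp : 0 < f₁ (z sstar) := lt_of_le_of_ne (hpos sstar) (Ne.symm hf₁star)
        have hhpos : 0 < h sstar := by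
          simp only [hhdef]; have := hgt sstar hsstar; linarith
        simp only [Pi.neg_apply]; nlinarith [mul_pos hp (mul_pos hhpos (neg_pos.2 hz'star))]
      · intro x hx
        rcases hIoo_of x hx with h1 | h1 | h1
        · subst h1; simp [hhs₀]
        · subst h1; simp [hhs₁]
        · have hhpos : 0 < h x := by
            simp only [hhdef]; have := hgt x h1; linarith
          simp only [Pi.neg_apply]; nlinarith [mul_nonneg (hpos x) (mul_pos hhpos (neg_pos.2 (hz'neg x h1))).le]
    rw [intervalIntegral.integral_neg, hmain] at h0
    norm_num at h0
  · -- f₁ ≤ 0, h < 0 : integrand ≤ 0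
    have h0 : 0 < ∫ x in s₀..s₁, -(f₁ (z x) * z' x * h x) := by
      apply aux_integral_pos hGc.neg _ hsstar
      · have hp : f₁ (z sstar) < 0 := lt_of_le_of_ne (hneg sstar) hf₁star
        have hhneg : h sstar < 0 := by
          simp only [hhdef]; have := hlt sstar hsstar; linarith
        simp only [Pi.neg_apply]; nlinarith [mul_pos (neg_pos.2 hp) (mul_pos_of_neg_of_neg hz'star hhneg)]
      · intro x hx
        rcases hIoo_of x hx with h1 | h1 | h1
        · subst h1; simp [hhs₀]
        · subst h1; simp [hhs₁]
        · have hhneg : h x < 0 := by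
            simp only [hhdef]; have := hlt x h1; linarith
          simp only [Pi.neg_apply]; nlinarith [mul_nonneg (neg_nonneg.2 (hneg x))
            (mul_pos_of_neg_of_neg (hz'neg x h1) hhneg).le]
    rw [intervalIntegral.integral_neg, hmain] at h0
    norm_num at h0
  · -- f₁ ≤ 0, h > 0 : integrand ≥ 0
    have h0 : 0 < ∫ x in s₀..s₁, f₁ (z x) * z' x * h x := by
      apply aux_integral_pos hGc _ hsstar
      · have hp : f₁ (z sstar) < 0 := lt_of_le_of_ne (hneg sstar) hf₁star
        have hhpos : 0 < h sstar := by
          simp only [hhdef]; have := hgt sstar hsstar; linarith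
        exact mul_pos (mul_pos_of_neg_of_neg hp hz'star) hhpos
      · intro x hx
        rcases hIoo_of x hx with h1 | h1 | h1
        · subst h1; simp [hhs₀]
        · subst h1; simp [hhs₁]
        · have hhpos : 0 < h x := by
            simp only [hhdef]; have := hgt x h1; linarith
          have hfz : 0 ≤ f₁ (z x) * z' x := by
            nlinarith [hneg x, hz'neg x h1]
          exact mul_nonneg hfz hhpos.le
    linarith [hmain]

/-- If `n` is not an even natural number (`n ≠ 0`), there is no simple closed `C²`
unit-speed planar curve with signed curvature `κ(s) = z(s)ⁿ + μ`, where `z` is the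
second coordinate (positive along the curve when `n < 0` or `n ∉ ℤ`). -/
theorem no_simple_closed_n_elastic
    (n μ L : ℝ) (hn0 : n ≠ 0) (hL : 0 < L)
    (hnoteven : ¬∃ k : ℕ, Even k ∧ n = (k : ℝ))
    (y z y' z' y'' z'' : ℝ → ℝ)
    (hy : ∀ s, HasDerivAt y (y' s) s) (hz : ∀ s, HasDerivAt z (z' s) s)
    (hy' : ∀ s, HasDerivAt y' (y'' s) s) (hz' : ∀ s, HasDerivAt z' (z'' s) s)
    (hC2 : Continuous y'' ∧ Continuous z'')
    (hunit : ∀ s, y' s ^ 2 + z' s ^ 2 = 1)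
    (hclosed : ∀ s, y (s + L) = y s ∧ z (s + L) = z s)
    (hsimple : Set.InjOn (fun s => (y s, z s)) (Set.Ico 0 L))
    (hzpos : (n < 0 ∨ ¬∃ k : ℤ, n = (k : ℝ)) → ∀ s, 0 < z s)
    (hκ : ∀ s, y' s * z'' s - z' s * y'' s = z s ^ n + μ) :
    False := by
  obtain ⟨hy''c, hz''c⟩ := hC2
  have hzc : Continuous z := continuous_iff_continuousAt.2 fun s => (hz s).continuousAt
  by_cases hcase : n < 0 ∨ ¬∃ k : ℤ, n = (k : ℝ)
  · have hz_all := hzpos hcase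
    apply no_closed_aux L hL (fun a => a ^ n + μ) (fun a => n * a ^ (n - 1))
      y z y' z' y'' z'' hy hz hy' hz' hy''c hz''c hunit hclosed hsimple hκ ?_ ?_ ?_ ?_
    · rintro a ⟨s, rfl⟩
      exact (Real.hasDerivAt_rpow_const (Or.inl (hz_all s).ne')).add_const μ
    · have hc : Continuous fun s => z s ^ (n - 1) := by
        apply continuous_iff_continuousAt.2
        intro s
        exact (Real.continuousAt_rpow_const (z s) (n - 1)
          (Or.inl (hz_all s).ne')).comp (hz s).continuousAt
      exact continuous_const.mul hc
    · rcases hn0.lt_or_gt with hn | hn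
      · right; intro s
        have := Real.rpow_pos_of_pos (hz_all s) (n - 1)
        show n * z s ^ (n - 1) ≤ 0
        nlinarith
      · left; intro s
        have := Real.rpow_pos_of_pos (hz_all s) (n - 1)
        show 0 ≤ n * z s ^ (n - 1)
        nlinarith
    · intro s _
      have := Real.rpow_pos_of_pos (hz_all s) (n - 1)
      exact mul_ne_zero hn0 this.ne'
  · push_neg at hcase
    obtain ⟨hn0', j, hj⟩ := hcase
    have hj0 : 0 ≤ j := by
      have h1 : (0:ℝ) ≤ (j:ℝ) := hj ▸ hn0'
      exact_mod_cast h1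
    set k : ℕ := j.toNat with hkdef
    have h2 : ((k:ℕ):ℤ) = j := Int.toNat_of_nonneg hj0
    have hnk : n = (k : ℝ) := by
      rw [hj, ← h2]; push_cast; ring
    have hk0 : k ≠ 0 := by
      intro h0
      rw [h0] at hnk
      simp at hnk
      exact hn0 hnk
    have hkodd : ¬ Even k := fun he => hnoteven ⟨k, he, hnk⟩
    have hkeven1 : Even (k - 1) := Nat.Odd.sub_odd (by simpa using hkodd) odd_one
    have hκ' : ∀ s, y' s * z'' s - z' s * y'' s = z s ^ k + μ := by
      intro s
      rw [hκ s, hnk, Real.rpow_natCast]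
    apply no_closed_aux L hL (fun a => a ^ k + μ) (fun a => (k:ℝ) * a ^ (k - 1))
      y z y' z' y'' z'' hy hz hy' hz' hy''c hz''c hunit hclosed hsimple hκ' ?_ ?_ ?_ ?_
    · rintro a -
      exact (hasDerivAt_pow k a).add_const μ
    · exact continuous_const.mul ((continuous_pow (k - 1)).comp hzc)
    · left; intro s
      exact mul_nonneg (Nat.cast_nonneg k) (hkeven1.pow_nonneg _)
    · intro s hzs
      exact mul_ne_zero (Nat.cast_ne_zero.2 hk0) (hkeven1.pow_pos hzs).ne'
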